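/- Let M be an expanding n×n integer matrix, D a digit set for M with attractor G = G(M,D), and Δ a digit set for M such that Q = G(M,Δ) has Lebesgue measure one. Let S ⊆ ℤⁿ be a finite invariant set, T_δ (δ ∈ Δ) the transition matrices indexed by S, and S̄₀ = { a ∈ ℤⁿ : (a + Q) ∩ G ≠ ∅ }. Then there exists p ∈ ℕ such that for every i ∈ S \ S̄₀ and every word (δ₁,…,δ_p) ∈ Δ^p, the i-th row of the product T_{δ₁}⋯T_{δ_p} is zero. -/

import Mathlib

open MeasureTheory Metric Filter Set Pointwise

/-- The point of `EuclideanSpace ℝ (Fin n)` with the integer coordinates `a`. -/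
noncomputable def intVec {n : ℕ} (a : Fin n → ℤ) : EuclideanSpace ℝ (Fin n) :=
  (EuclideanSpace.equiv (Fin n) ℝ).symm (fun i => (a i : ℝ))

/-- An integer matrix is expanding if all its (complex) eigenvalues have modulus `> 1`. -/
def IsExpanding {n : ℕ} (M : Matrix (Fin n) (Fin n) ℤ) : Prop :=
  ∀ μ : ℂ, (M.map (Int.cast : ℤ → ℂ)).charpoly.IsRoot μ → 1 < ‖μ‖

/-- `D ⊆ ℤⁿ` is a digit set for `M`: `0 ∈ D`, `|D| = |det M|`, and the elements of `D` are
pairwise non-congruent modulo the sublattice `Mℤⁿ`. -/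
def IsDigitSet {n : ℕ} (M : Matrix (Fin n) (Fin n) ℤ) (D : Finset (Fin n → ℤ)) : Prop :=
  0 ∈ D ∧ D.card = M.det.natAbs ∧
    ∀ d₁ ∈ D, ∀ d₂ ∈ D, (∃ z : Fin n → ℤ, d₁ - d₂ = M.mulVec z) → d₁ = d₂

/-- The attractor `G(M,D) = { ∑_{k=1}^∞ M^{-k} a_k : a_k ∈ D }`. -/
noncomputable def attractor {n : ℕ} (M : Matrix (Fin n) (Fin n) ℤ) (D : Finset (Fin n → ℤ)) :
    Set (EuclideanSpace ℝ (Fin n)) :=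
  {x | ∃ a : ℕ → (Fin n → ℤ), (∀ k, a k ∈ D) ∧
    x = (EuclideanSpace.equiv (Fin n) ℝ).symm
      (∑' k : ℕ, ((M.map (Int.cast : ℤ → ℝ))⁻¹ ^ (k + 1)).mulVec (fun i => ((a k i : ℝ))))}

/-- A set `S ⊆ ℤⁿ` is invariant (w.r.t. `M`, a set `Λ` and digits `Δ`) if for every `s ∈ S`,
`γ ∈ Λ`, `δ ∈ Δ`, whenever `M⁻¹(s + γ - δ)` is an integer point, it belongs to `S`. -/
def IsInvariantSet {n : ℕ} (M : Matrix (Fin n) (Fin n) ℤ) (Λ Δ : Finset (Fin n → ℤ))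
    (S : Set (Fin n → ℤ)) : Prop :=
  ∀ s ∈ S, ∀ γ ∈ Λ, ∀ δ ∈ Δ, ∀ x : Fin n → ℤ, M.mulVec x = s + γ - δ → x ∈ S

/-- The transition matrix `T_δ`, indexed by `S`: `(T_δ)_{a,b} = 1` if `Ma - b + δ ∈ D`, else `0`. -/
noncomputable def transMatrix {n : ℕ} (M : Matrix (Fin n) (Fin n) ℤ) (D : Finset (Fin n → ℤ))
    (S : Finset (Fin n → ℤ)) (δ : Fin n → ℤ) : Matrix S S ℝ :=
  fun a b => if M.mulVec (a : Fin n → ℤ) - (b : Fin n → ℤ) + δ ∈ D then 1 else 0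


section RowZeroAuxSection

namespace RowZeroAux

open Matrix Polynomial Filter Metric

attribute [local instance] Matrix.linftyOpNormedRing Matrix.linftyOpNormedAlgebra

variable {n : ℕ}

/-- Real vector with the given integer coordinates. -/
noncomputable def cvec {n : ℕ} (a : Fin n → ℤ) : Fin n → ℝ := fun i => (a i : ℝ)

lemma cvec_zero : cvec (0 : Fin n → ℤ) = 0 := by
  funext i; simp [cvec]

lemma norm_equiv_symm_le (v : Fin n → ℝ) :
    ‖(EuclideanSpace.equiv (Fin n) ℝ).symm v‖ ≤ Real.sqrt n * ‖v‖ := by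
  rw [EuclideanSpace.norm_eq]
  have h1 : ∀ i, ‖(EuclideanSpace.equiv (Fin n) ℝ).symm v i‖ ^ 2 ≤ ‖v‖ ^ 2 := by
    intro i
    have h : ‖(EuclideanSpace.equiv (Fin n) ℝ).symm v i‖ = ‖v i‖ := rfl
    rw [h]
    exact pow_le_pow_left₀ (norm_nonneg _) (norm_le_pi_norm v i) 2
  calc Real.sqrt (∑ i, ‖(EuclideanSpace.equiv (Fin n) ℝ).symm v i‖ ^ 2)
      ≤ Real.sqrt (∑ _i : Fin n, ‖v‖ ^ 2) :=
        Real.sqrt_le_sqrt (Finset.sum_le_sum fun i _ => h1 i)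
    _ = Real.sqrt ((n : ℝ) * ‖v‖ ^ 2) := by
        rw [Finset.sum_const, Finset.card_univ, Fintype.card_fin, nsmul_eq_mul]
    _ = Real.sqrt n * ‖v‖ := by
        rw [Real.sqrt_mul (Nat.cast_nonneg n), Real.sqrt_sq (norm_nonneg _)]

lemma cast_mulVec (M : Matrix (Fin n) (Fin n) ℤ) (v : Fin n → ℤ) :
    cvec (M.mulVec v) = (M.map (Int.cast : ℤ → ℝ)).mulVec (cvec v) := by
  funext i
  simp [cvec, Matrix.mulVec, dotProduct, Matrix.map_apply]

lemma telescope (A B : Matrix (Fin n) (Fin n) ℝ) (hAB : A * B = 1)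
    (u δv dv : ℕ → (Fin n → ℝ)) :
    ∀ p : ℕ, (∀ j, j < p → u (j+1) = B.mulVec (u j) + δv j - dv j) →
    u 0 + ∑ k ∈ Finset.range p, (A ^ (k+1)).mulVec (δv k)
      = (∑ k ∈ Finset.range p, (A ^ (k+1)).mulVec (dv k)) + (A ^ p).mulVec (u p) := by
  intro p
  induction p with
  | zero => intro _; simp [Matrix.one_mulVec]
  | succ p ih =>
    intro h
    have ih' := ih (fun j hj => h j (hj.trans (Nat.lt_succ_self p)))
    have hstep : (A ^ (p+1)).mulVec (u (p+1))
        = (A ^ p).mulVec (u p) + (A ^ (p+1)).mulVec (δv p) - (A ^ (p+1)).mulVec (dv p) := by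
      rw [h p (Nat.lt_succ_self p), Matrix.mulVec_sub, Matrix.mulVec_add, Matrix.mulVec_mulVec,
        pow_succ, mul_assoc, hAB, mul_one]
    rw [Finset.sum_range_succ, Finset.sum_range_succ, hstep, ← add_assoc, ih']
    abel

lemma exists_path (M : Matrix (Fin n) (Fin n) ℤ) (D S : Finset (Fin n → ℤ)) :
    ∀ (p : ℕ) (δw : Fin p → (Fin n → ℤ)) (i : S),
      (∃ b : S, (List.ofFn fun j => transMatrix M D S (δw j)).prod i b ≠ 0) →
      ∃ s : ℕ → S, s 0 = i ∧
        ∀ j (hj : j < p), M.mulVec ((s j : Fin n → ℤ)) - ↑(s (j+1)) + δw ⟨j, hj⟩ ∈ D := by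
  intro p
  induction p with
  | zero =>
    intro δw i _
    exact ⟨fun _ => i, rfl, fun j hj => absurd hj (Nat.not_lt_zero j)⟩
  | succ p ih =>
    rintro δw i ⟨b, hb⟩
    rw [List.ofFn_succ, List.prod_cons, Matrix.mul_apply] at hb
    obtain ⟨c, _, hc⟩ := Finset.exists_ne_zero_of_sum_ne_zero hb
    have h1 : transMatrix M D S (δw 0) i c ≠ 0 := left_ne_zero_of_mul hc
    have h2 : (List.ofFn fun j : Fin p => transMatrix M D S (δw j.succ)).prod c b ≠ 0 :=
      right_ne_zero_of_mul hc
    have hmem : M.mulVec ↑i - ↑c + δw 0 ∈ D := by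
      by_contra hK
      simp [transMatrix, hK] at h1
    obtain ⟨s', hs0, hs⟩ := ih (fun j => δw j.succ) c ⟨b, h2⟩
    refine ⟨fun k => Nat.casesOn k i s', rfl, ?_⟩
    intro j hj
    cases j with
    | zero => simpa [hs0] using hmem
    | succ j =>
      have := hs j (Nat.lt_of_succ_lt_succ hj)
      simpa [Fin.succ_mk] using this

lemma charpoly_eval {K : Type*} [Field K] (A : Matrix (Fin n) (Fin n) K) (μ : K) :
    A.charpoly.eval μ = (Matrix.scalar (Fin n) μ - A).det := by
  rw [Matrix.charpoly, eval_det, Matrix.matPolyEquiv_charmatrix]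
  simp

lemma mem_spectrum_iff_isRoot {K : Type*} [Field K] (A : Matrix (Fin n) (Fin n) K) (μ : K) :
    μ ∈ spectrum K A ↔ A.charpoly.IsRoot μ := by
  have halg : (algebraMap K (Matrix (Fin n) (Fin n) K)) μ = Matrix.scalar (Fin n) μ := rfl
  rw [spectrum.mem_iff, Polynomial.IsRoot, charpoly_eval, halg]
  rw [Matrix.isUnit_iff_isUnit_det, isUnit_iff_ne_zero, not_ne_iff]

lemma det_ne_zero_of_isExpanding (M : Matrix (Fin n) (Fin n) ℤ) (hM : IsExpanding M) :
    (M.map (Int.cast : ℤ → ℝ)).det ≠ 0 := by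
  have h0 : ¬ (M.map (Int.cast : ℤ → ℂ)).charpoly.IsRoot 0 :=
    fun h => absurd (hM 0 h) (by norm_num)
  intro hdet
  apply h0
  rw [show M.map (Int.cast : ℤ → ℝ) = (Int.castRingHom ℝ).mapMatrix M from rfl,
    ← RingHom.map_det] at hdet
  have hMdet : M.det = 0 := by simpa using hdet
  rw [Polynomial.IsRoot, charpoly_eval]
  have hc : (M.map (Int.cast : ℤ → ℂ)).det = 0 := by
    rw [show M.map (Int.cast : ℤ → ℂ) = (Int.castRingHom ℂ).mapMatrix M from rfl,
      ← RingHom.map_det, hMdet]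
    simp
  simp [Matrix.det_neg, hc]

lemma norm_map_complex (X : Matrix (Fin n) (Fin n) ℝ) :
    ‖X.map (Complex.ofReal : ℝ → ℂ)‖ = ‖X‖ := by
  rw [Matrix.linfty_opNorm_def, Matrix.linfty_opNorm_def]
  congr 1
  apply Finset.sup_congr rfl
  intro i _
  apply Finset.sum_congr rfl
  intro j _
  simp [Matrix.map_apply]

set_option maxHeartbeats 1000000 in
lemma exists_geom_bound (M : Matrix (Fin n) (Fin n) ℤ) (hM : IsExpanding M) :
    ∃ C r : ℝ, 0 < C ∧ 0 ≤ r ∧ r < 1 ∧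
      ∀ p : ℕ, ‖(M.map (Int.cast : ℤ → ℝ))⁻¹ ^ p‖ ≤ C * r ^ p := by
  classical
  set Mr := M.map (Int.cast : ℤ → ℝ) with hMr
  set Mc := M.map (Int.cast : ℤ → ℂ) with hMc
  set A := Mr⁻¹ with hA
  have hdet : Mr.det ≠ 0 := det_ne_zero_of_isExpanding M hM
  have hAM : A * Mr = 1 := Matrix.nonsing_inv_mul _ (isUnit_iff_ne_zero.mpr hdet)
  have hMA : Mr * A = 1 := Matrix.mul_nonsing_inv _ (isUnit_iff_ne_zero.mpr hdet)
  have hcast : Mc = Mr.map (Complex.ofReal : ℝ → ℂ) := by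
    rw [hMr, hMc, Matrix.map_map]
    ext i j
    simp
  have hAMc : (A.map (Complex.ofReal : ℝ → ℂ)) * Mc = 1 := by
    rw [hcast, show ((Complex.ofReal : ℝ → ℂ)) = ⇑Complex.ofRealHom from rfl,
      ← Matrix.map_mul, hAM]
    simp
  have hMAc : Mc * (A.map (Complex.ofReal : ℝ → ℂ)) = 1 := by
    rw [hcast, show ((Complex.ofReal : ℝ → ℂ)) = ⇑Complex.ofRealHom from rfl,
      ← Matrix.map_mul, hMA]
    simp
  set B := A.map (Complex.ofReal : ℝ → ℂ) with hB
  set uB : Units (Matrix (Fin n) (Fin n) ℂ) := ⟨B, Mc, hAMc, hMAc⟩ with huB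
  have hspec : ∀ μ : ℂ, μ ∈ spectrum ℂ B → ‖μ‖₊ < 1 := by
    intro μ hμ
    have hμ0 : μ ≠ 0 := spectrum.ne_zero_of_mem_of_unit (a := uB) hμ
    have hinv : (μ⁻¹ : ℂ) ∈ spectrum ℂ Mc := by
      have h2 := (spectrum.inv_mem_iff (r := Units.mk0 μ hμ0) (a := uB)).mp hμ
      rw [show ((uB⁻¹ : (Matrix (Fin n) (Fin n) ℂ)ˣ) : Matrix (Fin n) (Fin n) ℂ) = Mc
        from rfl] at h2
      simpa using h2
    have hroot := hM μ⁻¹ ((mem_spectrum_iff_isRoot Mc μ⁻¹).mp hinv)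
    rw [norm_inv] at hroot
    have habs : ‖μ‖ < 1 := by
      by_contra hle
      push_neg at hle
      exact absurd hroot (not_lt.mpr (inv_le_one_of_one_le₀ hle))
    rw [← NNReal.coe_lt_coe]
    simpa using habs
  have hrad : spectralRadius ℂ B < 1 := by
    by_cases hne : (spectrum ℂ B).Nonempty
    · have := spectrum.spectralRadius_lt_of_forall_lt_of_nonempty hne (r := 1)
        (fun k hk => hspec k hk)
      simpa using this
    · rw [Set.not_nonempty_iff_eq_empty] at hne
      rw [spectralRadius, hne]
      simp
  have htend := spectrum.pow_nnnorm_pow_one_div_tendsto_nhds_spectralRadius B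
  have hev : ∀ᶠ k : ℕ in atTop, ((‖B ^ k‖₊ : ENNReal) ^ (1 / (k:ℝ))) < 1 :=
    htend.eventually_lt_const hrad
  obtain ⟨k0, hk01, hk0⟩ := ((eventually_ge_atTop 1).and hev).exists
  have hk0pos : (0:ℝ) < (k0:ℝ) := by exact_mod_cast hk01
  have hBk : ‖B ^ k0‖ < 1 := by
    have h2 : (((‖B ^ k0‖₊ : ENNReal) ^ (1/(k0:ℝ))) ^ (k0:ℝ)) < 1 ^ (k0:ℝ) :=
      ENNReal.rpow_lt_rpow hk0 hk0pos
    rw [← ENNReal.rpow_mul, one_div_mul_cancel (ne_of_gt hk0pos), ENNReal.rpow_one,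
      ENNReal.one_rpow] at h2
    have h3 : ‖B ^ k0‖₊ < 1 := by exact_mod_cast h2
    exact_mod_cast h3
  have hpowmap : ∀ k : ℕ, B ^ k = (A ^ k).map (Complex.ofReal : ℝ → ℂ) := by
    intro k
    rw [hB, show ((Complex.ofReal : ℝ → ℂ)) = ⇑Complex.ofRealHom from rfl,
      ← RingHom.mapMatrix_apply, ← RingHom.mapMatrix_apply, map_pow]
  have hs : ‖A ^ k0‖ < 1 := by
    rw [← norm_map_complex (A ^ k0), ← hpowmap]
    exact hBk
  set s := ‖A ^ k0‖ with hs_def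
  set σr := max s (1/2) with hσ
  have hσ0 : (0:ℝ) < σr := lt_max_of_lt_right one_half_pos
  have hσ1 : σr < 1 := max_lt hs one_half_lt_one
  have hsσ : s ≤ σr := le_max_left _ _
  set r := σr ^ ((1:ℝ)/(k0:ℝ)) with hr_def
  have hr0 : 0 < r := Real.rpow_pos_of_pos hσ0 _
  have hr1 : r < 1 := Real.rpow_lt_one hσ0.le hσ1 (by positivity)
  have hrk0 : r ^ k0 = σr := by
    rw [hr_def, ← Real.rpow_natCast (σr ^ ((1:ℝ)/(k0:ℝ))) k0, ← Real.rpow_mul hσ0.le,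
      one_div_mul_cancel (ne_of_gt hk0pos), Real.rpow_one]
  set B0 := (∑ t ∈ Finset.range k0, ‖A ^ t‖) + 1 with hB0
  have hB0pos : 0 < B0 :=
    add_pos_of_nonneg_of_pos (Finset.sum_nonneg fun _ _ => norm_nonneg _) one_pos
  have hB0le : ∀ t, t < k0 → ‖A ^ t‖ ≤ B0 := fun t ht => le_add_of_le_of_nonneg
    (Finset.single_le_sum (fun _ _ => norm_nonneg _) (Finset.mem_range.mpr ht)) zero_le_one
  refine ⟨B0 / r ^ k0, r, div_pos hB0pos (pow_pos hr0 k0), hr0.le, hr1, ?_⟩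
  intro p
  rw [div_mul_eq_mul_div, le_div_iff₀ (pow_pos hr0 k0)]
  obtain ⟨q, t, ht, hp⟩ : ∃ q t, t < k0 ∧ p = k0 * q + t :=
    ⟨p / k0, p % k0, Nat.mod_lt _ (by omega), (Nat.div_add_mod p k0).symm⟩
  have h1 : ‖A ^ p‖ ≤ s ^ q * B0 := by
    rw [hp, pow_add, pow_mul]
    cases q with
    | zero => simpa using hB0le t ht
    | succ q' =>
      calc ‖(A ^ k0) ^ (q'+1) * A ^ t‖ ≤ ‖(A ^ k0) ^ (q'+1)‖ * ‖A ^ t‖ := norm_mul_le _ _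
        _ ≤ s ^ (q'+1) * B0 := mul_le_mul (norm_pow_le' _ (Nat.succ_pos q')) (hB0le t ht)
            (norm_nonneg _) (pow_nonneg (norm_nonneg _) _)
  have h2 : s ^ q * B0 ≤ σr ^ q * B0 :=
    mul_le_mul_of_nonneg_right (pow_le_pow_left₀ (norm_nonneg _) hsσ q) hB0pos.le
  have h3 : σr ^ q = r ^ (k0 * q) := by rw [pow_mul, hrk0]
  have h4 : r ^ (k0 * q) * r ^ k0 ≤ r ^ p := by
    rw [hp, ← pow_add]
    apply pow_le_pow_of_le_one hr0.le hr1.le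
    omega
  calc ‖A ^ p‖ * r ^ k0 ≤ (σr ^ q * B0) * r ^ k0 :=
        mul_le_mul_of_nonneg_right (h1.trans h2) (pow_nonneg hr0.le k0)
    _ = B0 * (r ^ (k0*q) * r ^ k0) := by rw [h3]; ring
    _ ≤ B0 * r ^ p := mul_le_mul_of_nonneg_left h4 hB0pos.le

set_option maxHeartbeats 1000000 in
lemma isCompact_attractor (M : Matrix (Fin n) (Fin n) ℤ) (D : Finset (Fin n → ℤ))
    (C r : ℝ) (hr0 : 0 ≤ r) (hr1 : r < 1)
    (hpow : ∀ p : ℕ, ‖(M.map (Int.cast : ℤ → ℝ))⁻¹ ^ p‖ ≤ C * r ^ p) :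
    IsCompact (attractor M D) := by
  classical
  set A := (M.map (Int.cast : ℤ → ℝ))⁻¹ with hA
  set K := ∑ d ∈ D, ‖cvec d‖ with hK
  have hKle : ∀ d ∈ D, ‖cvec d‖ ≤ K := fun d hd =>
    Finset.single_le_sum (fun _ _ => norm_nonneg _) hd
  have hcont : Continuous (fun a : ℕ → ↥D => ∑' k : ℕ, (A ^ (k+1)).mulVec (cvec ↑(a k))) := by
    refine continuous_tsum (u := fun k => C * r ^ (k+1) * K) (fun k => ?_) ?_ (fun k a => ?_)
    · have hco : Continuous (fun d : ↥D => (A ^ (k+1)).mulVec (cvec ↑d)) :=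
        continuous_of_discreteTopology
      exact hco.comp (continuous_apply k)
    · exact Summable.mul_right _
        ((summable_nat_add_iff 1).mpr ((summable_geometric_of_lt_one hr0 hr1).mul_left C))
    · refine le_trans (Matrix.linfty_opNorm_mulVec _ _) ?_
      exact mul_le_mul (hpow (k+1)) (hKle _ (a k).2) (norm_nonneg _)
        (le_trans (norm_nonneg _) (hpow (k+1)))
  have hrange : attractor M D
      = Set.range (fun a : ℕ → ↥D => (EuclideanSpace.equiv (Fin n) ℝ).symm
          (∑' k : ℕ, (A ^ (k+1)).mulVec (cvec ↑(a k)))) := by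
    ext x
    constructor
    · rintro ⟨a, ha, rfl⟩
      exact ⟨fun k => ⟨a k, ha k⟩, rfl⟩
    · rintro ⟨a, rfl⟩
      exact ⟨fun k => ↑(a k), fun k => (a k).2, rfl⟩
  rw [hrange]
  exact isCompact_range ((EuclideanSpace.equiv (Fin n) ℝ).symm.continuous.comp hcont)

lemma norm_symm_mulVec_le (A : Matrix (Fin n) (Fin n) ℝ) (v : Fin n → ℝ) (c K : ℝ)
    (hA : ‖A‖ ≤ c) (hv : ‖v‖ ≤ K) :
    ‖(EuclideanSpace.equiv (Fin n) ℝ).symm (A.mulVec v)‖ ≤ Real.sqrt n * (c * K) := by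
  refine le_trans (norm_equiv_symm_le _) ?_
  refine mul_le_mul_of_nonneg_left ?_ (Real.sqrt_nonneg _)
  refine le_trans (Matrix.linfty_opNorm_mulVec _ _) ?_
  exact mul_le_mul hA hv (norm_nonneg _) (le_trans (norm_nonneg _) hA)

end RowZeroAux

end RowZeroAuxSection

/-- For every `i ∈ S` outside `S̄₀ = {a : (a+Q) ∩ G ≠ ∅}` there is `p` such that the `i`-th row of
every product of `p` transition matrices vanishes. -/
theorem exists_row_zero_of_not_meet {n : ℕ} (M : Matrix (Fin n) (Fin n) ℤ)
    (hM : IsExpanding M) (D Δ : Finset (Fin n → ℤ)) (hD : IsDigitSet M D)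
    (hΔ : IsDigitSet M Δ) (hQtile : volume (attractor M Δ) = 1)
    (S : Finset (Fin n → ℤ)) (hSinv : IsInvariantSet M D Δ ↑S) :
    ∃ p : ℕ, 0 < p ∧ ∀ i : S,
      ((fun x => intVec (i : Fin n → ℤ) + x) '' attractor M Δ) ∩ attractor M D = ∅ →
      ∀ w : Fin p → Δ, ∀ b : S,
        ((List.ofFn fun j => transMatrix M D S ↑(w j)).prod) i b = 0 := by
  classical
  obtain ⟨C, r, hC, hr0, hr1, hpow⟩ := RowZeroAux.exists_geom_bound M hM
  have hdet : (M.map (Int.cast : ℤ → ℝ)).det ≠ 0 := RowZeroAux.det_ne_zero_of_isExpanding M hM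
  have hAM : (M.map (Int.cast : ℤ → ℝ))⁻¹ * M.map (Int.cast : ℤ → ℝ) = 1 :=
    Matrix.nonsing_inv_mul _ (isUnit_iff_ne_zero.mpr hdet)
  have hQcomp : IsCompact (attractor M Δ) := RowZeroAux.isCompact_attractor M Δ C r hr0 hr1 hpow
  have hGcomp : IsCompact (attractor M D) := RowZeroAux.isCompact_attractor M D C r hr0 hr1 hpow
  set KS : ℝ := (∑ v ∈ S, ‖RowZeroAux.cvec v‖) + 1 with hKS
  have hKSle : ∀ v : S, ‖RowZeroAux.cvec (↑v : Fin n → ℤ)‖ ≤ KS := fun v => le_add_of_le_of_nonneg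
    (Finset.single_le_sum (fun _ _ => norm_nonneg _) v.2) zero_le_one
  have key : ∀ i : S,
      ((fun x => intVec (i : Fin n → ℤ) + x) '' attractor M Δ) ∩ attractor M D = ∅ →
      ∃ N : ℕ, ∀ p, N ≤ p → ∀ w : Fin p → Δ, ∀ b : S,
        ((List.ofFn fun j => transMatrix M D S ↑(w j)).prod) i b = 0 := by
    intro i hi
    have hXcomp : IsCompact ((fun x => intVec (i : Fin n → ℤ) + x) '' attractor M Δ) :=
      hQcomp.image (continuous_const.add continuous_id)
    have hdisj0 : Disjoint ((fun x => intVec (i : Fin n → ℤ) + x) '' attractor M Δ)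
        (attractor M D) := Set.disjoint_iff_inter_eq_empty.mpr hi
    obtain ⟨ε, hε, hdisj⟩ := hdisj0.exists_thickenings hXcomp hGcomp.isClosed
    have htend : Tendsto (fun p : ℕ => Real.sqrt n * (C * r ^ p * KS)) atTop (nhds 0) := by
      have h0 : Tendsto (fun p : ℕ => r ^ p) atTop (nhds 0) :=
        tendsto_pow_atTop_nhds_zero_of_lt_one hr0 hr1
      have h1 := h0.const_mul (Real.sqrt n * C * KS)
      rw [mul_zero] at h1
      refine h1.congr (fun p => ?_)
      ring
    obtain ⟨N, hN⟩ := Filter.eventually_atTop.mp (htend.eventually_lt_const hε)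
    refine ⟨N, fun p hp w b => ?_⟩
    by_contra hne
    obtain ⟨s, hs0, hsD⟩ := RowZeroAux.exists_path M D S p (fun j => ↑(w j)) i ⟨b, hne⟩
    set δZ : ℕ → (Fin n → ℤ) := fun k => if h : k < p then ↑(w ⟨k, h⟩) else 0 with hδZ
    set dZ : ℕ → (Fin n → ℤ) :=
      fun k => if h : k < p then M.mulVec ↑(s k) - ↑(s (k+1)) + ↑(w ⟨k, h⟩) else 0 with hdZ
    have hδmem : ∀ k, δZ k ∈ Δ := by
      intro k
      rw [hδZ]
      dsimp only
      split
      · exact (w _).2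
      · exact hΔ.1
    have hdmem : ∀ k, dZ k ∈ D := by
      intro k
      rw [hdZ]
      dsimp only
      split
      · exact hsD k ‹_›
      · exact hD.1
    have hrel : ∀ j, j < p → RowZeroAux.cvec (↑(s (j+1)) : Fin n → ℤ)
        = (M.map (Int.cast : ℤ → ℝ)).mulVec (RowZeroAux.cvec ↑(s j))
          + RowZeroAux.cvec (δZ j) - RowZeroAux.cvec (dZ j) := by
      intro j hj
      have hZ : (↑(s (j+1)) : Fin n → ℤ) = M.mulVec ↑(s j) + δZ j - dZ j := by
        rw [hδZ, hdZ]
        dsimp only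
        rw [dif_pos hj, dif_pos hj]
        abel
      rw [hZ, ← RowZeroAux.cast_mulVec]
      funext i0
      simp only [RowZeroAux.cvec, Pi.add_apply, Pi.sub_apply]
      push_cast
      ring
    have hid := RowZeroAux.telescope _ _ hAM (fun k => RowZeroAux.cvec (↑(s k) : Fin n → ℤ))
      (fun k => RowZeroAux.cvec (δZ k)) (fun k => RowZeroAux.cvec (dZ k)) p hrel
    have hq : (∑' k : ℕ, (((M.map (Int.cast : ℤ → ℝ))⁻¹) ^ (k+1)).mulVec
          (RowZeroAux.cvec (δZ k)))
        = ∑ k ∈ Finset.range p, (((M.map (Int.cast : ℤ → ℝ))⁻¹) ^ (k+1)).mulVec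
          (RowZeroAux.cvec (δZ k)) := by
      apply tsum_eq_sum
      intro k hk
      rw [hδZ]
      dsimp only
      rw [dif_neg (by simpa using hk), RowZeroAux.cvec_zero, Matrix.mulVec_zero]
    have hg : (∑' k : ℕ, (((M.map (Int.cast : ℤ → ℝ))⁻¹) ^ (k+1)).mulVec
          (RowZeroAux.cvec (dZ k)))
        = ∑ k ∈ Finset.range p, (((M.map (Int.cast : ℤ → ℝ))⁻¹) ^ (k+1)).mulVec
          (RowZeroAux.cvec (dZ k)) := by
      apply tsum_eq_sum
      intro k hk
      rw [hdZ]
      dsimp only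
      rw [dif_neg (by simpa using hk), RowZeroAux.cvec_zero, Matrix.mulVec_zero]
    set qv := ∑' k : ℕ, (((M.map (Int.cast : ℤ → ℝ))⁻¹) ^ (k+1)).mulVec
      (RowZeroAux.cvec (δZ k)) with hqv
    set gv := ∑' k : ℕ, (((M.map (Int.cast : ℤ → ℝ))⁻¹) ^ (k+1)).mulVec
      (RowZeroAux.cvec (dZ k)) with hgv
    have hqQ : (EuclideanSpace.equiv (Fin n) ℝ).symm qv ∈ attractor M Δ := ⟨δZ, hδmem, rfl⟩
    have hgG : (EuclideanSpace.equiv (Fin n) ℝ).symm gv ∈ attractor M D := ⟨dZ, hdmem, rfl⟩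
    set x : EuclideanSpace ℝ (Fin n) := intVec ↑i + (EuclideanSpace.equiv (Fin n) ℝ).symm qv
      with hx
    have hxmem : x ∈ (fun y => intVec (i : Fin n → ℤ) + y) '' attractor M Δ :=
      ⟨(EuclideanSpace.equiv (Fin n) ℝ).symm qv, hqQ, rfl⟩
    set g : EuclideanSpace ℝ (Fin n) := (EuclideanSpace.equiv (Fin n) ℝ).symm gv with hgdef
    have hveceq : RowZeroAux.cvec (↑i : Fin n → ℤ) + qv - gv
        = (((M.map (Int.cast : ℤ → ℝ))⁻¹) ^ p).mulVec (RowZeroAux.cvec ↑(s p)) := by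
      rw [hq, hg,
        show RowZeroAux.cvec (↑i : Fin n → ℤ) = RowZeroAux.cvec (↑(s 0) : Fin n → ℤ)
          from by rw [hs0], hid]
      abel
    have hdist : dist x g < ε := by
      have hxg : x - g = (EuclideanSpace.equiv (Fin n) ℝ).symm
          (RowZeroAux.cvec (↑i : Fin n → ℤ) + qv - gv) := by
        rw [hx, hgdef,
          show intVec (↑i : Fin n → ℤ)
            = (EuclideanSpace.equiv (Fin n) ℝ).symm (RowZeroAux.cvec ↑i) from rfl,
          ← map_add, ← map_sub]
      rw [dist_eq_norm, hxg, hveceq]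
      exact lt_of_le_of_lt
        (RowZeroAux.norm_symm_mulVec_le _ _ _ _ (hpow p) (hKSle (s p))) (hN p hp)
    have hx1 : x ∈ thickening ε ((fun y => intVec (i : Fin n → ℤ) + y) '' attractor M Δ) :=
      self_subset_thickening hε _ hxmem
    have hx2 : x ∈ thickening ε (attractor M D) :=
      Metric.mem_thickening_iff.mpr ⟨g, hgG, hdist⟩
    exact Set.disjoint_left.mp hdisj hx1 hx2
  have key' : ∀ i : S, ∃ N : ℕ,
      (((fun x => intVec (i : Fin n → ℤ) + x) '' attractor M Δ) ∩ attractor M D = ∅) →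
      ∀ p, N ≤ p → ∀ w : Fin p → Δ, ∀ b : S,
        ((List.ofFn fun j => transMatrix M D S ↑(w j)).prod) i b = 0 := by
    intro i
    by_cases h : ((fun x => intVec (i : Fin n → ℤ) + x) '' attractor M Δ) ∩ attractor M D = ∅
    · obtain ⟨N, hNi⟩ := key i h
      exact ⟨N, fun _ => hNi⟩
    · exact ⟨0, fun h' => absurd h' h⟩
  choose Nf hNf using key'
  refine ⟨(Finset.univ.sup Nf) + 1, Nat.succ_pos _, fun i hi w b => ?_⟩
  exact hNf i hi _ (Nat.le_succ_of_le (Finset.le_sup (Finset.mem_univ i))) w b
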